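/- Let N, Q be unit vectors in ℝ³ with Q not parallel to N, and let S be a unit vector on the great circle orthogonal to M := Q × N (i.e., M · S = 0) with S ∉ {±N, ±Q}. If (Q × S) · (S × N) > 0, then for all sufficiently small θ > 0, N · (R(S,θ)Q − Q) > 0 (the finite rotation detaches the contact); if (Q × S) · (S × N) < 0, then for all sufficiently small θ > 0, N · (R(S,θ)Q − Q) < 0 (the finite rotation penetrates the constraint). -/

import Mathlib

open Matrix

/-- Rotation about the axis `S` (unit vector) by angle `θ` (Rodrigues' formula). -/
noncomputable def rot (S : Fin 3 → ℝ) (θ : ℝ) (Q : Fin 3 → ℝ) : Fin 3 → ℝ :=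
  Real.cos θ • Q + Real.sin θ • (S ⨯₃ Q) + ((1 - Real.cos θ) * (S ⬝ᵥ Q)) • S

lemma rot_key (N Q S : Fin 3 → ℝ) (hS : S ⬝ᵥ S = 1) (hM : (Q ⨯₃ N) ⬝ᵥ S = 0) (θ : ℝ) :
    N ⬝ᵥ (rot S θ Q - Q) = (1 - Real.cos θ) * ((Q ⨯₃ S) ⬝ᵥ (S ⨯₃ N)) := by
  simp only [rot, cross_apply, dotProduct, Fin.sum_univ_three, Pi.sub_apply, Pi.add_apply,
    Pi.smul_apply, smul_eq_mul, cons_val_zero, cons_val_one, head_cons, cons_val_two,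
    tail_cons, head_fin_const, of_apply, cons_val', empty_val', cons_val_fin_one] at *
  linear_combination Real.sin θ * hM + (1 - Real.cos θ) * (Q 0 * N 0 + Q 1 * N 1 + Q 2 * N 2) * hS

theorem finite_rotation_boundary_sign (N Q S : Fin 3 → ℝ)
    (hN : N ⬝ᵥ N = 1) (hQ : Q ⬝ᵥ Q = 1) (hS : S ⬝ᵥ S = 1)
    (hnpar : ¬ ∃ c : ℝ, Q = c • N)
    (hM : (Q ⨯₃ N) ⬝ᵥ S = 0)
    (hSN : S ≠ N) (hSN' : S ≠ -N) (hSQ : S ≠ Q) (hSQ' : S ≠ -Q) :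
    ((Q ⨯₃ S) ⬝ᵥ (S ⨯₃ N) > 0 →
      ∃ ε > (0 : ℝ), ∀ θ : ℝ, 0 < θ → θ < ε → N ⬝ᵥ (rot S θ Q - Q) > 0) ∧
    ((Q ⨯₃ S) ⬝ᵥ (S ⨯₃ N) < 0 →
      ∃ ε > (0 : ℝ), ∀ θ : ℝ, 0 < θ → θ < ε → N ⬝ᵥ (rot S θ Q - Q) < 0) := by
  have key := rot_key N Q S hS hM
  have hcos : ∀ θ : ℝ, 0 < θ → θ < 1 → 0 < 1 - Real.cos θ := by
    intro θ h1 h2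
    have : Real.cos θ < Real.cos 0 := by
      apply Real.cos_lt_cos_of_nonneg_of_le_pi le_rfl
      · linarith [Real.pi_gt_three]
      · exact h1
    simpa [Real.cos_zero] using sub_pos.mpr this
  constructor
  · intro hpos
    exact ⟨1, one_pos, fun θ h1 h2 => by rw [key]; exact mul_pos (hcos θ h1 h2) hpos⟩
  · intro hneg
    refine ⟨1, one_pos, fun θ h1 h2 => ?_⟩
    rw [key]
    exact mul_neg_of_pos_of_neg (hcos θ h1 h2) hneg
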